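/- Let V be a finite set with |V| = N ≥ 3, and let ϱ, c ∈ [0,1]. Let (B_e, C_e), indexed by the 2-element subsets e of V, be an independent family of pairs of random variables with values in {0,1}², such that for every e one has E[B_e] = E[C_e] = ϱ and E[B_e·C_e] = c. Let T_B := ∑ over 3-element subsets {i,j,k} of V of B_{{i,j}}·B_{{i,k}}·B_{{j,k}}, and define T_C analogously from the C_e. Then E[T_B·T_C] = C(N,3)·( (C(N−3,3) + 3·C(N−3,2))·ϱ⁶ + 3·(N−3)·c·ϱ⁴ + c³ ). -/

import Mathlib

open MeasureTheory ProbabilityTheory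

section helpers

variable {Ω : Type*} [MeasurableSpace Ω] {P : Measure Ω} [IsProbabilityMeasure P]

lemma my_prod01 {ι : Type*} {X : ι → Ω → ℝ} (u : Finset ι)
    (h01 : ∀ i ∈ u, ∀ ω, X i ω = 0 ∨ X i ω = 1) (ω : Ω) :
    (∏ i ∈ u, X i ω) = 0 ∨ (∏ i ∈ u, X i ω) = 1 :=
  Finset.prod_induction (fun i => X i ω) (fun x => x = 0 ∨ x = 1)
    (by rintro a b (ha | ha) (hb | hb) <;> simp [ha, hb]) (Or.inr rfl)
    (fun i hi => h01 i hi ω)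

lemma my_int01 {f : Ω → ℝ} (hm : Measurable f) (h : ∀ ω, f ω = 0 ∨ f ω = 1) :
    Integrable f P := by
  refine (integrable_const (1:ℝ)).mono' hm.aestronglyMeasurable
    (Filter.Eventually.of_forall fun ω => ?_)
  rcases h ω with h | h <;> simp [h]

lemma my_indep_prod {ι : Type*} {X : ι → Ω → ℝ}
    (hindep : iIndepFun X P) (hmeas : ∀ i, Measurable (X i))
    (h01 : ∀ i ω, X i ω = 0 ∨ X i ω = 1) (u : Finset ι) :
    ∫ ω, ∏ i ∈ u, X i ω ∂P = ∏ i ∈ u, ∫ ω, X i ω ∂P := by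
  classical
  induction u using Finset.induction_on with
  | empty => simp
  | insert a u ha ih =>
    have hpm : Measurable fun ω => ∏ i ∈ u, X i ω :=
      Finset.measurable_prod u (fun i _ => hmeas i)
    have hfn : (∏ j ∈ u, X j) = fun ω => ∏ i ∈ u, X i ω := by
      funext ω; simp [Finset.prod_apply]
    have hInd : IndepFun (X a) (fun ω => ∏ i ∈ u, X i ω) P := by
      rw [← hfn]; exact (hindep.indepFun_finset_prod_of_notMem hmeas ha).symm
    have h1 : Integrable (X a) P := my_int01 (hmeas a) (h01 a)
    have h2 : Integrable (fun ω => ∏ i ∈ u, X i ω) P :=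
      my_int01 hpm (my_prod01 u (fun i _ => h01 i))
    have hmul := IndepFun.integral_mul_eq_mul_integral hInd h1.aestronglyMeasurable h2.aestronglyMeasurable
    have key : ∫ ω, X a ω * ∏ i ∈ u, X i ω ∂P
        = (∫ ω, X a ω ∂P) * ∫ ω, ∏ i ∈ u, X i ω ∂P := hmul
    simp only [Finset.prod_insert ha, key, ih]

lemma my_count {V : Type*} [Fintype V] [DecidableEq V] {N : ℕ} (hV : Fintype.card V = N)
    (s : Finset V) (hs : s.card = 3) (j : ℕ) (hj : j ≤ 3) :
    ((Finset.univ.powersetCard 3).filter (fun t => (s ∩ t).card = j)).card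
      = Nat.choose 3 j * Nat.choose (N - 3) (3 - j) := by
  classical
  have hcompl : (Finset.univ \ s).card = N - 3 := by
    rw [Finset.card_sdiff_of_subset (Finset.subset_univ s), Finset.card_univ, hV, hs]
  have hrhs : Nat.choose 3 j * Nat.choose (N - 3) (3 - j)
      = ((s.powersetCard j) ×ˢ ((Finset.univ \ s).powersetCard (3 - j))).card := by
    rw [Finset.card_product, Finset.card_powersetCard, Finset.card_powersetCard, hs, hcompl]
  rw [hrhs]
  refine Finset.card_bij' (fun t _ => (t ∩ s, t \ s)) (fun p _ => p.1 ∪ p.2) ?_ ?_ ?_ ?_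
  · intro t ht
    rw [Finset.mem_filter, Finset.mem_powersetCard] at ht
    obtain ⟨⟨-, htc⟩, hj'⟩ := ht
    have hsum := Finset.card_inter_add_card_sdiff t s
    rw [htc, Finset.inter_comm t s, hj'] at hsum
    refine Finset.mem_product.2 ⟨Finset.mem_powersetCard.2 ⟨Finset.inter_subset_right, ?_⟩,
      Finset.mem_powersetCard.2 ⟨Finset.sdiff_subset_sdiff (Finset.subset_univ t) le_rfl, ?_⟩⟩
    · show (t ∩ s).card = j; rw [Finset.inter_comm]; exact hj'
    · show (t \ s).card = 3 - j; omega
  · intro p hp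
    rw [Finset.mem_product, Finset.mem_powersetCard, Finset.mem_powersetCard] at hp
    obtain ⟨⟨hp1, hc1⟩, hp2, hc2⟩ := hp
    have hdisj : Disjoint p.1 p.2 := by
      refine Finset.disjoint_left.2 fun x hx1 hx2 => ?_
      exact (Finset.mem_sdiff.1 (hp2 hx2)).2 (hp1 hx1)
    have hinter : s ∩ (p.1 ∪ p.2) = p.1 := by
      rw [Finset.inter_union_distrib_left]
      have h1 : s ∩ p.1 = p.1 := Finset.inter_eq_right.2 hp1
      have h2 : s ∩ p.2 = ∅ := by
        refine Finset.eq_empty_of_forall_notMem fun x hx => ?_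
        rcases Finset.mem_inter.1 hx with ⟨hxs, hxp⟩
        exact (Finset.mem_sdiff.1 (hp2 hxp)).2 hxs
      rw [h1, h2, Finset.union_empty]
    refine Finset.mem_filter.2 ⟨Finset.mem_powersetCard.2 ⟨Finset.subset_univ _, ?_⟩, ?_⟩
    · rw [Finset.card_union_of_disjoint hdisj, hc1, hc2]; omega
    · rw [hinter, hc1]
  · intro t ht
    dsimp only
    rw [Finset.union_comm]
    exact Finset.sdiff_union_inter t s
  · intro p hp
    rw [Finset.mem_product, Finset.mem_powersetCard, Finset.mem_powersetCard] at hp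
    obtain ⟨⟨hp1, hc1⟩, hp2, hc2⟩ := hp
    have h1 : (p.1 ∪ p.2) ∩ s = p.1 := by
      rw [Finset.union_inter_distrib_right]
      have ha : p.1 ∩ s = p.1 := Finset.inter_eq_left.2 hp1
      have hb : p.2 ∩ s = ∅ := by
        refine Finset.eq_empty_of_forall_notMem fun x hx => ?_
        rcases Finset.mem_inter.1 hx with ⟨hxp, hxs⟩
        exact (Finset.mem_sdiff.1 (hp2 hxp)).2 hxs
      rw [ha, hb, Finset.union_empty]
    have h2 : (p.1 ∪ p.2) \ s = p.2 := by
      rw [Finset.union_sdiff_distrib]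
      have ha : p.1 \ s = ∅ := Finset.sdiff_eq_empty_iff_subset.2 hp1
      have hb : p.2 \ s = p.2 := by
        refine Finset.sdiff_eq_self_iff_disjoint.2 (Finset.disjoint_left.2 fun x hx hxs => ?_)
        exact (Finset.mem_sdiff.1 (hp2 hx)).2 hxs
      rw [ha, hb, Finset.empty_union]
    rw [h1, h2]

end helpers

theorem stmt_11 {Ω : Type*} [MeasurableSpace Ω] (P : Measure Ω) [IsProbabilityMeasure P]
    (V : Type*) [Fintype V] [DecidableEq V] (N : ℕ) (hV : Fintype.card V = N)
    (hN : 3 ≤ N) (ϱ c : ℝ) (hϱ : ϱ ∈ Set.Icc (0:ℝ) 1) (hc : c ∈ Set.Icc (0:ℝ) 1)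
    (B C : Finset V → Ω → ℝ)
    (hBmeas : ∀ e : Finset V, e.card = 2 → Measurable (B e))
    (hCmeas : ∀ e : Finset V, e.card = 2 → Measurable (C e))
    (hB01 : ∀ e : Finset V, e.card = 2 → ∀ ω, B e ω = 0 ∨ B e ω = 1)
    (hC01 : ∀ e : Finset V, e.card = 2 → ∀ ω, C e ω = 0 ∨ C e ω = 1)
    (hindep : iIndepFun
      (fun e : {e : Finset V // e.card = 2} => fun ω => (B e.1 ω, C e.1 ω)) P)
    (hEB : ∀ e : Finset V, e.card = 2 → ∫ ω, B e ω ∂P = ϱ)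
    (hEC : ∀ e : Finset V, e.card = 2 → ∫ ω, C e ω ∂P = ϱ)
    (hEBC : ∀ e : Finset V, e.card = 2 → ∫ ω, B e ω * C e ω ∂P = c) :
    ∫ ω, (∑ t ∈ Finset.univ.powersetCard 3, ∏ e ∈ t.powersetCard 2, B e ω) *
        (∑ t ∈ Finset.univ.powersetCard 3, ∏ e ∈ t.powersetCard 2, C e ω) ∂P
      = (N.choose 3 : ℝ) *
        ((((N - 3).choose 3 : ℝ) + 3 * ((N - 3).choose 2 : ℝ)) * ϱ ^ 6 +
          3 * ((N : ℝ) - 3) * c * ϱ ^ 4 + c ^ 3) := by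
  classical
  have hedge : ∀ s : Finset V, ∀ e ∈ s.powersetCard 2, e.card = 2 :=
    fun s e he => (Finset.mem_powersetCard.1 he).2
  set P3 := (Finset.univ : Finset V).powersetCard 3 with hP3def
  have hcard3 : ∀ s ∈ P3, s.card = 3 := fun s hs => (Finset.mem_powersetCard.1 hs).2
  have hBprodmeas : ∀ s ∈ P3, Measurable fun ω => ∏ e ∈ s.powersetCard 2, B e ω :=
    fun s _ => Finset.measurable_prod _ (fun e he => hBmeas e (hedge s e he))
  have hCprodmeas : ∀ s ∈ P3, Measurable fun ω => ∏ e ∈ s.powersetCard 2, C e ω :=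
    fun s _ => Finset.measurable_prod _ (fun e he => hCmeas e (hedge s e he))
  have hTermInt : ∀ s ∈ P3, ∀ t ∈ P3, Integrable
      (fun ω => (∏ e ∈ s.powersetCard 2, B e ω) * (∏ e ∈ t.powersetCard 2, C e ω)) P := by
    intro s hs t ht
    refine my_int01 ((hBprodmeas s hs).mul (hCprodmeas t ht)) fun ω => ?_
    have p1 := my_prod01 (s.powersetCard 2) (fun e he => hB01 e (hedge s e he)) ω
    have p2 := my_prod01 (t.powersetCard 2) (fun e he => hC01 e (hedge t e he)) ω
    rcases p1 with h | h <;> rcases p2 with h' | h' <;> simp [h, h']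
  -- the per-pair integral
  have key : ∀ s ∈ P3, ∀ t ∈ P3,
      ∫ ω, (∏ e ∈ s.powersetCard 2, B e ω) * (∏ e ∈ t.powersetCard 2, C e ω) ∂P
        = c ^ ((s ∩ t).card.choose 2) * ϱ ^ (6 - 2 * ((s ∩ t).card.choose 2)) := by
    intro s hs t ht
    set SE := s.powersetCard 2 with hSE
    set TE := t.powersetCard 2 with hTE
    set U := SE ∪ TE with hU
    obtain ⟨k, hk⟩ : ∃ k, (s ∩ t).card.choose 2 = k := ⟨_, rfl⟩
    rw [hk]
    have hU2 : ∀ e ∈ U, e.card = 2 := by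
      intro e he
      rcases Finset.mem_union.1 he with h | h
      · exact hedge s e h
      · exact hedge t e h
    have hIeq : SE ∩ TE = (s ∩ t).powersetCard 2 := by
      ext e
      simp only [Finset.mem_inter, hSE, hTE, Finset.mem_powersetCard, Finset.subset_inter_iff]
      tauto
    have hIcard : (SE ∩ TE).card = k := by
      rw [hIeq, Finset.card_powersetCard, hk]
    have hSEcard : SE.card = 3 := by
      rw [hSE, Finset.card_powersetCard, hcard3 s hs]; decide
    have hTEcard : TE.card = 3 := by
      rw [hTE, Finset.card_powersetCard, hcard3 t ht]; decide
    have hjle : (s ∩ t).card ≤ 3 := by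
      rw [← hcard3 s hs]; exact Finset.card_le_card Finset.inter_subset_left
    have hkle : k ≤ 3 := by
      rw [← hk]
      calc (s ∩ t).card.choose 2 ≤ Nat.choose 3 2 := Nat.choose_le_choose 2 hjle
      _ = 3 := by decide
    have hUcard : U.card = 6 - k := by
      have h6 := Finset.card_union_add_card_inter SE TE
      rw [hSEcard, hTEcard, hIcard, ← hU] at h6
      omega
    -- the independent family
    set F : Finset V → Ω → ℝ :=
      fun a ω => (if a ∈ SE then B a ω else 1) * (if a ∈ TE then C a ω else 1) with hF
    set X : {e : Finset V // e.card = 2} → Ω → ℝ := fun e => F e.1 with hX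
    have hXindep : iIndepFun X P := by
      have := hindep.comp
        (fun e (p : ℝ × ℝ) => (if e.1 ∈ SE then p.1 else 1) * (if e.1 ∈ TE then p.2 else 1))
        (fun e => by
          apply Measurable.mul <;> split_ifs <;>
            first
              | exact measurable_fst
              | exact measurable_snd
              | exact measurable_const)
      exact this
    have hXmeas : ∀ e, Measurable (X e) := by
      intro e
      apply Measurable.mul <;> split_ifs <;>
        first
          | exact hBmeas e.1 e.2
          | exact hCmeas e.1 e.2
          | exact measurable_const
    have hX01 : ∀ e ω, X e ω = 0 ∨ X e ω = 1 := by
      intro e ω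
      simp only [hX, hF]
      rcases hB01 e.1 e.2 ω with h | h <;> rcases hC01 e.1 e.2 ω with h' | h' <;>
        split_ifs <;> simp [h, h']
    set U' : Finset {e : Finset V // e.card = 2} := U.subtype (fun e => e.card = 2) with hU'
    have hprodeq : ∀ ω, (∏ e ∈ SE, B e ω) * (∏ e ∈ TE, C e ω) = ∏ e ∈ U', X e ω := by
      intro ω
      have h1 : ∏ e ∈ U', X e ω = ∏ a ∈ U, F a ω :=
        Finset.prod_subtype_of_mem (fun a => F a ω) hU2
      rw [h1, hF]
      simp only []
      rw [Finset.prod_mul_distrib, Finset.prod_ite_mem U SE (fun a => B a ω),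
        Finset.prod_ite_mem U TE (fun a => C a ω),
        Finset.inter_eq_right.2 Finset.subset_union_left,
        Finset.inter_eq_right.2 Finset.subset_union_right]
    have hXint : ∀ e : {e : Finset V // e.card = 2}, e.1 ∈ U →
        ∫ ω, X e ω ∂P = (if e.1 ∈ SE ∩ TE then c else ϱ) := by
      intro e he
      by_cases h1 : e.1 ∈ SE <;> by_cases h2 : e.1 ∈ TE
      · have : X e = fun ω => B e.1 ω * C e.1 ω := by
          funext ω; simp [hX, hF, h1, h2]
        rw [this, if_pos (Finset.mem_inter.2 ⟨h1, h2⟩)]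
        exact hEBC e.1 e.2
      · have : X e = fun ω => B e.1 ω := by
          funext ω; simp [hX, hF, h1, h2]
        rw [this, if_neg (fun hmem => h2 (Finset.mem_inter.1 hmem).2)]
        exact hEB e.1 e.2
      · have : X e = fun ω => C e.1 ω := by
          funext ω; simp [hX, hF, h1, h2]
        rw [this, if_neg (fun hmem => h1 (Finset.mem_inter.1 hmem).1)]
        exact hEC e.1 e.2
      · exact absurd (Finset.mem_union.1 he) (by tauto)
    calc ∫ ω, (∏ e ∈ SE, B e ω) * (∏ e ∈ TE, C e ω) ∂P
        = ∫ ω, ∏ e ∈ U', X e ω ∂P := by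
          congr 1; funext ω; exact hprodeq ω
      _ = ∏ e ∈ U', ∫ ω, X e ω ∂P := my_indep_prod hXindep hXmeas hX01 U'
      _ = ∏ e ∈ U', (if e.1 ∈ SE ∩ TE then c else ϱ) := by
          refine Finset.prod_congr rfl fun e he => ?_
          exact hXint e (by simpa using Finset.mem_subtype.1 he)
      _ = ∏ a ∈ U, (if a ∈ SE ∩ TE then c else ϱ) :=
          Finset.prod_subtype_of_mem (fun a => if a ∈ SE ∩ TE then c else ϱ) hU2
      _ = c ^ k * ϱ ^ (6 - 2 * k) := by
          rw [Finset.prod_ite (fun _ => c) (fun _ => ϱ), Finset.prod_const, Finset.prod_const]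
          have hIsubU : SE ∩ TE ⊆ U := Finset.inter_subset_left.trans Finset.subset_union_left
          have hfil : U.filter (fun x => x ∈ SE ∩ TE) = SE ∩ TE := by
            rw [Finset.filter_mem_eq_inter]
            exact Finset.inter_eq_right.2 hIsubU
          have h1 : (U.filter (fun x => x ∈ SE ∩ TE)).card = k := by rw [hfil, hIcard]
          have h2 : (U.filter (fun x => x ∉ SE ∩ TE)).card = 6 - 2 * k := by
            rw [Finset.filter_not, hfil, Finset.card_sdiff_of_subset hIsubU, hIcard, hUcard]
            omega
          rw [h1, h2]
  -- expand the integral of the double sum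
  have hswap : ∫ ω, (∑ s ∈ P3, ∏ e ∈ s.powersetCard 2, B e ω) *
      (∑ t ∈ P3, ∏ e ∈ t.powersetCard 2, C e ω) ∂P
      = ∑ s ∈ P3, ∑ t ∈ P3,
          ∫ ω, (∏ e ∈ s.powersetCard 2, B e ω) * (∏ e ∈ t.powersetCard 2, C e ω) ∂P := by
    simp_rw [Finset.sum_mul_sum]
    rw [integral_finset_sum P3 (fun s hs =>
      integrable_finset_sum P3 (fun t ht => hTermInt s hs t ht))]
    exact Finset.sum_congr rfl fun s hs =>
      integral_finset_sum P3 (fun t ht => hTermInt s hs t ht)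
  rw [hswap]
  -- define the pair value function
  set G : ℕ → ℝ := fun j => c ^ (j.choose 2) * ϱ ^ (6 - 2 * (j.choose 2)) with hG
  have hsum : ∀ s ∈ P3, ∑ t ∈ P3,
      ∫ ω, (∏ e ∈ s.powersetCard 2, B e ω) * (∏ e ∈ t.powersetCard 2, C e ω) ∂P
      = (((N-3).choose 3 : ℝ) + 3 * ((N-3).choose 2 : ℝ)) * ϱ ^ 6 +
          3 * ((N : ℝ) - 3) * c * ϱ ^ 4 + c ^ 3 := by
    intro s hs
    have step1 : ∑ t ∈ P3,
        ∫ ω, (∏ e ∈ s.powersetCard 2, B e ω) * (∏ e ∈ t.powersetCard 2, C e ω) ∂P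
        = ∑ t ∈ P3, G ((s ∩ t).card) := by
      refine Finset.sum_congr rfl fun t ht => ?_
      rw [key s hs t ht]
    rw [step1]
    have hmaps : ∀ t ∈ P3, (s ∩ t).card ∈ Finset.range 4 := by
      intro t ht
      rw [Finset.mem_range]
      have : (s ∩ t).card ≤ 3 := by
        rw [← hcard3 s hs]; exact Finset.card_le_card Finset.inter_subset_left
      omega
    rw [← Finset.sum_fiberwise_of_maps_to hmaps (fun t => G ((s ∩ t).card))]
    have step2 : ∀ j ∈ Finset.range 4,
        ∑ t ∈ P3.filter (fun t => (s ∩ t).card = j), G ((s ∩ t).card)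
        = (Nat.choose 3 j * Nat.choose (N - 3) (3 - j) : ℝ) * G j := by
      intro j hj
      have : ∑ t ∈ P3.filter (fun t => (s ∩ t).card = j), G ((s ∩ t).card)
          = ∑ t ∈ P3.filter (fun t => (s ∩ t).card = j), G j := by
        refine Finset.sum_congr rfl fun t ht => ?_
        rw [(Finset.mem_filter.1 ht).2]
      rw [this, Finset.sum_const, my_count hV s (hcard3 s hs) j
        (by rw [Finset.mem_range] at hj; omega), nsmul_eq_mul]
      push_cast
      ring
    rw [Finset.sum_congr rfl step2]
    have h30 : Nat.choose 3 0 = 1 := by decide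
    have h31 : Nat.choose 3 1 = 3 := by decide
    have h32 : Nat.choose 3 2 = 3 := by decide
    have h33 : Nat.choose 3 3 = 1 := by decide
    have e0 : Nat.choose 0 2 = 0 := by decide
    have e1 : Nat.choose 1 2 = 0 := by decide
    have e2 : Nat.choose 2 2 = 1 := by decide
    have e3 : Nat.choose 3 2 = 3 := by decide
    have hG0 : G 0 = ϱ ^ 6 := by rw [hG]; simp only [e0]; norm_num
    have hG1 : G 1 = ϱ ^ 6 := by rw [hG]; simp only [e1]; norm_num
    have hG2 : G 2 = c * ϱ ^ 4 := by rw [hG]; simp only [e2]; norm_num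
    have hG3 : G 3 = c ^ 3 := by rw [hG]; simp only [e3]; norm_num
    have hN1 : Nat.choose (N - 3) 1 = N - 3 := Nat.choose_one_right _
    have hN0 : Nat.choose (N - 3) 0 = 1 := Nat.choose_zero_right _
    have hcast : ((N - 3 : ℕ) : ℝ) = (N : ℝ) - 3 := by
      push_cast [Nat.cast_sub hN]
      ring
    rw [Finset.sum_range_succ, Finset.sum_range_succ, Finset.sum_range_succ,
      Finset.sum_range_one]
    rw [h30, h31, h32, h33, hG0, hG1, hG2, hG3, hN1, hN0]
    norm_num
    rw [hcast]
    ring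
  rw [Finset.sum_congr rfl hsum, Finset.sum_const, nsmul_eq_mul]
  congr 2
  rw [hP3def, Finset.card_powersetCard, Finset.card_univ, hV]
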